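/- arXiv:1902.01981 — 2 statements merged into one kernel-verified Lean document; each statement's English description precedes it below -/
import Mathlib

section
/- For integers n > s+1 > 0 and L ≥ 2, the computation load of CodedReduce is strictly smaller than that of Gradient Coding with the same straggler fraction: 1/( (n/(s+1)) + ... + (n/(s+1))^L ) < (s+1)/n. -/
open Finset

/-- for `n > s+1 > 0` and `L ≥ 2`, the CodedReduce computation load is strictly
smaller than that of Gradient Coding with the same straggler fraction:
`1/((n/(s+1)) + ⋯ + (n/(s+1))^L) < (s+1)/n`. -/
theorem stmt1 (n s L : ℕ) (hs : s + 1 < n) (hL : 2 ≤ L) :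
    (1 : ℝ) / (∑ l ∈ Finset.Icc 1 L, ((n : ℝ) / (s + 1)) ^ l) < ((s : ℝ) + 1) / n := by
  set q : ℝ := (n : ℝ) / (s + 1) with hq
  have hs1 : (0 : ℝ) < (s : ℝ) + 1 := by positivity
  have hn : ((s : ℝ) + 1) < n := by exact_mod_cast hs
  have hq1 : 1 < q := (one_lt_div hs1).mpr hn
  have hq0 : 0 < q := lt_trans one_pos hq1
  have hsum : q + q ^ 2 ≤ ∑ l ∈ Finset.Icc 1 L, q ^ l := by
    have hsub : ({1, 2} : Finset ℕ) ⊆ Finset.Icc 1 L := by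
      intro x hx
      simp only [Finset.mem_insert, Finset.mem_singleton] at hx
      rcases hx with h | h <;> subst h <;> simp [Finset.mem_Icc] <;> omega
    calc q + q ^ 2 = ∑ l ∈ ({1, 2} : Finset ℕ), q ^ l := by norm_num
      _ ≤ _ := Finset.sum_le_sum_of_subset_of_nonneg hsub
            (fun i _ _ => by positivity)
  have hqsum : q < ∑ l ∈ Finset.Icc 1 L, q ^ l :=
    lt_of_lt_of_le (by nlinarith) hsum
  have : (1 : ℝ) / (∑ l ∈ Finset.Icc 1 L, q ^ l) < 1 / q :=
    one_div_lt_one_div_of_lt hq0 hqsum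
  calc (1 : ℝ) / (∑ l ∈ Finset.Icc 1 L, q ^ l) < 1 / q := this
    _ = ((s : ℝ) + 1) / n := by rw [hq, one_div_div]
end

section
/- In an (n,L)-regular tree with the CodedReduce allocation (each data point replicated in s+1 of the n sibling subtrees at every level, each node keeping r·d points), the size of the data set assigned to each subtree at layer l satisfies |D^{T(l,i)}| = ((s+1)/n)^l · d - r·d · Σ_{j=1}^{l-1} ((s+1)/n)^j for all i, where r = r_CR. -/
open Finset

lemma icc_pow_sum (q : ℝ) : ∀ m : ℕ, ∑ j ∈ Finset.Icc 1 m, q ^ j = q * ∑ j ∈ Finset.range m, q ^ j := by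
  intro m
  induction m with
  | zero => simp
  | succ k ih =>
      rw [Finset.sum_Icc_succ_top (by omega : 1 ≤ k + 1), ih, Finset.sum_range_succ]
      ring

/-- in an `(n,L)`-regular tree with the CodedReduce allocation, the subtree data
set sizes `a l = |D^{T(l,i)}|` (identical across siblings `i`) satisfy the recursion
`a 1 = ((s+1)/n)·d`, `a (l+1) = ((s+1)/n)·(a l − r·d)`, and hence for all `1 ≤ l ≤ L`,
`a l = ((s+1)/n)^l · d − r·d · ∑_{j=1}^{l-1} ((s+1)/n)^j`, where `r = r_CR`. -/
theorem stmt3 (n s L : ℕ) (hs : s < n) (hL : 1 ≤ L) (d : ℝ) (hd : 0 < d)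
    (r : ℝ) (hr : r = 1 / (∑ l ∈ Finset.Icc 1 L, ((n : ℝ) / (s + 1)) ^ l))
    (a : ℕ → ℝ) (ha1 : a 1 = ((s + 1 : ℝ) / n) * d)
    (harec : ∀ l, 1 ≤ l → l ≤ L - 1 → a (l + 1) = ((s + 1 : ℝ) / n) * (a l - r * d)) :
    ∀ l, 1 ≤ l → l ≤ L →
      a l = ((s + 1 : ℝ) / n) ^ l * d - r * d * ∑ j ∈ Finset.Icc 1 (l - 1), ((s + 1 : ℝ) / n) ^ j := by
  intro l hl
  induction l, hl using Nat.le_induction with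
  | base => intro _; simpa using ha1
  | succ l hl ih =>
      intro hlL
      set q : ℝ := (s + 1 : ℝ) / n with hq
      obtain ⟨k, rfl⟩ : ∃ k, l = k + 1 := ⟨l - 1, by omega⟩
      rw [harec (k + 1) (by omega) (by omega), ih (by omega)]
      simp only [Nat.add_sub_cancel, icc_pow_sum q, Finset.sum_range_succ]
      have hgs : ∑ j ∈ Finset.range (k + 1), q ^ j = q * ∑ j ∈ Finset.range k, q ^ j + 1 :=
        geom_sum_succ
      rw [Finset.sum_range_succ] at hgs
      linear_combination r * d * q * hgs
end
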